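/- Let G be a topological group and H a closed normal subgroup of G that is first-countable (in the subspace topology). If the quotient group G/H has a P-base for a directed poset P with P ≥_T ω (e.g., P = ω^ω or P = 𝒦(M) for a noncompact separable metric space M), then G has a P × ω-base; in particular, if in addition P × ω ≤_T P, then G has a P-base. -/

import Mathlib

/-- A neighborhood `P`-base at a point. -/
def HasNbhdPBase (P : Type*) [Preorder P] {X : Type*} [TopologicalSpace X] (x : X) : Prop :=
  ∃ U : P → Set X, (∀ p, U p ∈ nhds x) ∧ Antitone U ∧ ∀ V ∈ nhds x, ∃ p, U p ⊆ V

/-- Auxiliary: a decreasing sequence of neighborhoods of 1 with `O (n+1) * O (n+1) ⊆ O n`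
and `O n ⊆ B n`. -/
lemma exists_good_seq {G : Type*} [Group G] [TopologicalSpace G] [IsTopologicalGroup G]
    (B : ℕ → Set G) (hB : ∀ n, B n ∈ nhds (1 : G)) :
    ∃ O : ℕ → Set G, (∀ n, O n ∈ nhds (1 : G)) ∧ (∀ n, O n ⊆ B n) ∧
      ∀ n, ∀ x ∈ O (n + 1), ∀ y ∈ O (n + 1), x * y ∈ O n := by
  have step : ∀ s : Set G, s ∈ nhds (1 : G) →
      ∃ t : Set G, t ∈ nhds (1 : G) ∧ ∀ v ∈ t, ∀ w ∈ t, v * w ∈ s := by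
    intro s hs
    obtain ⟨V, hV, h⟩ := exists_nhds_one_split hs
    exact ⟨V, hV, h⟩
  choose c hc1 hc2 using step
  let O : ℕ → {s : Set G // s ∈ nhds (1 : G)} := fun n =>
    Nat.rec ⟨B 0, hB 0⟩
      (fun n prev => ⟨c (prev.1 ∩ B (n + 1)) (Filter.inter_mem prev.2 (hB (n + 1))),
        hc1 _ _⟩) n
  have hmem : ∀ n, (O n).1 ∈ nhds (1 : G) := fun n => (O n).2
  have hsplit : ∀ n, ∀ x ∈ (O (n + 1)).1, ∀ y ∈ (O (n + 1)).1, x * y ∈ (O n).1 ∩ B (n + 1) :=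
    fun n x hx y hy => hc2 _ _ x hx y hy
  have hsub : ∀ n, (O n).1 ⊆ B n := by
    intro n
    cases n with
    | zero => exact fun x hx => hx
    | succ n =>
        intro x hx
        have h1 : (1 : G) ∈ (O (n + 1)).1 := mem_of_mem_nhds (hmem (n + 1))
        have := hsplit n x hx 1 h1
        simpa using this.2
  exact ⟨fun n => (O n).1, hmem, hsub, fun n x hx y hy => (hsplit n x hx y hy).1⟩

theorem stmt10 {G : Type*} [Group G] [TopologicalSpace G] [IsTopologicalGroup G]
    (H : Subgroup G) [H.Normal] (hclosed : IsClosed (H : Set G))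
    [FirstCountableTopology H]
    {P : Type*} [Preorder P] (hPdir : IsDirected P (· ≤ ·))
    (hPω : ∃ f : P → ℕ, Monotone f ∧ ∀ n : ℕ, ∃ p : P, n ≤ f p)
    (hQbase : HasNbhdPBase P (1 : G ⧸ H)) :
    HasNbhdPBase (P × ℕ) (1 : G) ∧
      ((∃ ψ : P → P × ℕ, Monotone ψ ∧ ∀ q : P × ℕ, ∃ p : P, q ≤ ψ p) →
        HasNbhdPBase P (1 : G)) := by
  obtain ⟨V, hVmem, hVanti, hVbase⟩ := hQbase
  -- a countable antitone basis of neighborhoods of 1 in H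
  obtain ⟨b, hb⟩ := (nhds (1 : H)).exists_antitone_basis
  -- lift it to neighborhoods of 1 in G
  have hlift : ∀ n : ℕ, ∃ t : Set G, t ∈ nhds (1 : G) ∧ (Subtype.val ⁻¹' t : Set H) ⊆ b n := by
    intro n
    have hbn : b n ∈ nhds (1 : H) := hb.mem n
    rw [nhds_induced] at hbn
    exact Filter.mem_comap.1 hbn
  choose B hBmem hBsub using hlift
  obtain ⟨O, hOmem, hOB, hOsplit⟩ := exists_good_seq B hBmem
  -- the trace of O on H is a base of 𝓝 (1 : H)
  have htrace : ∀ s ∈ nhds (1 : H), ∃ n : ℕ, ∀ g : H, (g : G) ∈ O n → g ∈ s := by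
    intro s hs
    obtain ⟨n, hn⟩ := hb.mem_iff.1 hs
    refine ⟨n, fun g hgO => hn ?_⟩
    exact hBsub n (hOB n hgO)
  -- O is antitone
  have hOanti : Antitone O := by
    refine antitone_nat_of_succ_le fun k x hx => ?_
    have h1 : (1 : G) ∈ O (k + 1) := mem_of_mem_nhds (hOmem (k + 1))
    have := hOsplit k x hx 1 h1
    simpa using this
  set π : G → G ⧸ H := ((↑) : G → G ⧸ H) with hπ
  have hπcont : Continuous π := continuous_quotient_mk'
  -- candidate base
  set N : P × ℕ → Set G := fun q => π ⁻¹' (V q.1) ∩ O q.2 with hN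
  have hNmem : ∀ q, N q ∈ nhds (1 : G) := by
    intro q
    refine Filter.inter_mem ?_ (hOmem q.2)
    have h1 : V q.1 ∈ nhds (π 1) := by simpa [hπ] using hVmem q.1
    exact hπcont.continuousAt.preimage_mem_nhds h1
  have hNanti : Antitone N := by
    intro q q' hqq'
    exact Set.inter_subset_inter (Set.preimage_mono (hVanti hqq'.1)) (hOanti hqq'.2)
  have hNbase : ∀ U ∈ nhds (1 : G), ∃ q : P × ℕ, N q ⊆ U := by
    intro U hU
    obtain ⟨U₁, hU₁, hU₁split⟩ := exists_nhds_one_split hU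
    -- pick n with H ∩ O n ⊆ U₁
    have hU₁H : (Subtype.val ⁻¹' U₁ : Set H) ∈ nhds (1 : H) := by
      rw [nhds_induced]
      exact Filter.preimage_mem_comap (by simpa using hU₁)
    obtain ⟨n, hn⟩ := htrace _ hU₁H
    -- auxiliary neighborhood W
    have hWmem : O (n + 1) ∩ (O (n + 1))⁻¹ ∩ U₁ ∈ nhds (1 : G) := by
      refine Filter.inter_mem (Filter.inter_mem (hOmem (n + 1)) ?_) hU₁
      simpa using inv_mem_nhds_one G (hOmem (n + 1))
    set W : Set G := O (n + 1) ∩ (O (n + 1))⁻¹ ∩ U₁ with hW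
    -- π '' W is a neighborhood of 1 in G ⧸ H
    have hπW : π '' W ∈ nhds (1 : G ⧸ H) := by
      have : π '' W ∈ Filter.map π (nhds (1 : G)) :=
        Filter.image_mem_map hWmem
      rwa [← QuotientGroup.nhds_eq H 1] at this
    obtain ⟨p, hp⟩ := hVbase _ hπW
    refine ⟨(p, n + 1), ?_⟩
    rintro x ⟨hxV, hxO⟩
    obtain ⟨w, hwW, hwx⟩ := hp hxV
    -- x * w⁻¹ ∈ H
    have hxw : x⁻¹ * w ∈ H := (QuotientGroup.eq).1 hwx.symm
    have hh : x * w⁻¹ ∈ H := by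
      have : x * (x⁻¹ * w) * x⁻¹ ∈ H := Subgroup.Normal.conj_mem ‹H.Normal› _ hxw x
      have heq : x * (x⁻¹ * w) * x⁻¹ = w * x⁻¹ := by group
      rw [heq] at this
      simpa using H.inv_mem this
    have hwinv : w⁻¹ ∈ O (n + 1) := by
      have := hwW.1.2
      simpa using this
    have hhO : x * w⁻¹ ∈ O n := hOsplit n x hxO w⁻¹ hwinv
    have hhU₁ : x * w⁻¹ ∈ U₁ := by
      have := hn ⟨x * w⁻¹, hh⟩ hhO
      simpa using this
    have hxU : x ∈ U := by
      have := hU₁split _ hhU₁ _ hwW.2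
      simpa using this
    exact hxU
  refine ⟨⟨N, hNmem, hNanti, hNbase⟩, ?_⟩
  rintro ⟨ψ, hψmono, hψcof⟩
  refine ⟨fun p => N (ψ p), fun p => hNmem _, fun p p' h => hNanti (hψmono h), ?_⟩
  intro U hU
  obtain ⟨q, hq⟩ := hNbase U hU
  obtain ⟨p, hp⟩ := hψcof q
  exact ⟨p, (hNanti hp).trans hq⟩
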